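/- For the star graph Sₙ = K_{n−1,1} with n ≥ 3, the power domination polynomial is 𝒫(Sₙ;x) = x(x+1)^{n−1} + x^{n−1} + (n−1)x^{n−2}. -/

import Mathlib

open Finset Polynomial

/-- A set `T` is closed under the zero forcing rule: whenever `v ∈ T` has exactly one
neighbor outside `T`, that neighbor is in `T`. -/
def SimpleGraph.ForceClosed {V : Type*} (G : SimpleGraph V) (T : Set V) : Prop :=
  ∀ v ∈ T, ∀ w : V, G.neighborSet v \ T = {w} → w ∈ T

/-- `S` is a zero forcing set: starting from `S` and applying the forcing rule repeatedly
colors every vertex, i.e. every force-closed superset of `S` is everything. -/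
def SimpleGraph.IsZeroForcingSet {V : Type*} (G : SimpleGraph V) (S : Set V) : Prop :=
  ∀ T : Set V, S ⊆ T → G.ForceClosed T → T = Set.univ

/-- The closed neighborhood `N[S]` of a set of vertices. -/
def SimpleGraph.closedNbhd {V : Type*} (G : SimpleGraph V) (S : Set V) : Set V :=
  S ∪ {v | ∃ u ∈ S, G.Adj u v}

/-- `S` is a power dominating set: first color `N[S]` (domination step), then the
forcing process colors every vertex. -/
def SimpleGraph.IsPowerDomSet {V : Type*} (G : SimpleGraph V) (S : Set V) : Prop :=
  G.IsZeroForcingSet (G.closedNbhd S)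

/-- `S` is a dominating set. -/
def SimpleGraph.IsDomSet {V : Type*} (G : SimpleGraph V) (S : Set V) : Prop :=
  G.closedNbhd S = Set.univ

/-- `p(G;i)`: the number of power dominating sets of `G` of cardinality `i`. -/
noncomputable def pdCount {V : Type*} [Fintype V] (G : SimpleGraph V) (i : ℕ) : ℕ :=
  Nat.card {S : Finset V // G.IsPowerDomSet ↑S ∧ S.card = i}

/-- The power domination polynomial `𝒫(G;x) = ∑_{i=1}^n p(G;i) xⁱ`. -/
noncomputable def pdPoly {V : Type*} [Fintype V] (G : SimpleGraph V) : Polynomial ℤ :=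
  ∑ i ∈ Finset.Icc 1 (Fintype.card V), Polynomial.C (pdCount G i : ℤ) * Polynomial.X ^ i

/-- The graph obtained from `G` by adding a new dominating vertex (`none`) adjacent to all
vertices of `G`. -/
def addDomVertex {V : Type*} (G : SimpleGraph V) : SimpleGraph (Option V) where
  Adj x y := (∃ a b, x = some a ∧ y = some b ∧ G.Adj a b) ∨
    (x = none ∧ y.isSome) ∨ (x.isSome ∧ y = none)
  symm := by
    constructor
    rintro x y (⟨a, b, hx, hy, h⟩ | ⟨hx, hy⟩ | ⟨hx, hy⟩)
    · exact Or.inl ⟨b, a, hy, hx, h.symm⟩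
    · exact Or.inr (Or.inr ⟨hy, hx⟩)
    · exact Or.inr (Or.inl ⟨hy, hx⟩)
  loopless := by
    constructor
    rintro x (⟨a, b, hx, hy, h⟩ | ⟨hx, hy⟩ | ⟨hx, hy⟩)
    · rw [hx] at hy; cases hy; exact G.irrefl h
    · rw [hx] at hy; simp at hy
    · rw [hy] at hx; simp at hx


-- auxiliary lemmas
variable {m : ℕ}

local notation "Star" => addDomVertex (⊥ : SimpleGraph (Fin m))

lemma adj_iff (x y : Option (Fin m)) :
    (Star).Adj x y ↔ (x = none ∧ y.isSome) ∨ (x.isSome ∧ y = none) := by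
  constructor
  · rintro (⟨a, b, _, _, h⟩ | h | h)
    · exact absurd h (by simp)
    · exact Or.inl h
    · exact Or.inr h
  · rintro (h | h)
    · exact Or.inr (Or.inl h)
    · exact Or.inr (Or.inr h)

lemma nbhd_some (a : Fin m) : (Star).neighborSet (some a) = {none} := by
  ext x
  simp only [SimpleGraph.mem_neighborSet, adj_iff, Set.mem_singleton_iff]
  cases x <;> simp

lemma nbhd_none : (Star).neighborSet none = {x | x.isSome} := by
  ext x
  simp only [SimpleGraph.mem_neighborSet, adj_iff, Set.mem_setOf_eq]
  cases x <;> simp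

lemma card_pre (S : Finset (Option (Fin m))) (h : none ∉ S) :
    (univ.filter (fun a : Fin m => some a ∈ S)).card = S.card := by
  apply Finset.card_bij (fun a _ => some a)
  · intro a ha; exact (Finset.mem_filter.1 ha).2
  · intro a _ b _ hab; exact Option.some_injective _ hab
  · intro b hb
    cases b with
    | none => exact absurd hb h
    | some a => exact ⟨a, Finset.mem_filter.2 ⟨Finset.mem_univ _, hb⟩, rfl⟩

lemma char (hm : 2 ≤ m) (S : Finset (Option (Fin m))) :
    (Star).IsPowerDomSet ↑S ↔ (none ∈ S ∨ m - 1 ≤ S.card) := by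
  constructor
  · -- contrapositive
    intro hpd
    by_contra hc
    push_neg at hc
    obtain ⟨hnone, hcard⟩ := hc
    have hcard' : S.card ≤ m - 2 := by omega
    have hmiss : 2 ≤ (univ.filter (fun a : Fin m => some a ∉ S)).card := by
      have htot := Finset.card_filter_add_card_filter_not
        (s := (univ : Finset (Fin m))) (p := fun a => some a ∈ S)
      simp only [Finset.card_univ, Fintype.card_fin] at htot
      have hp := card_pre S hnone
      omega
    set T : Set (Option (Fin m)) := ↑S ∪ {none} with hT
    have hsub : (Star).closedNbhd ↑S ⊆ T := by
      rintro x (hx | ⟨u, hu, hadj⟩)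
      · exact Or.inl hx
      · rcases (adj_iff u x).1 hadj with ⟨hu', _⟩ | ⟨_, hx'⟩
        · rw [hu'] at hu; exact absurd hu hnone
        · exact Or.inr hx'
    have hfc : (Star).ForceClosed T := by
      intro v hv w hw
      cases v with
      | some a =>
        exfalso
        rw [nbhd_some] at hw
        have : (none : Option (Fin m)) ∈ T := Or.inr rfl
        have hws : w ∈ ({none} : Set (Option (Fin m))) \ T := hw ▸ rfl
        rcases hws with ⟨h1, h2⟩
        rw [Set.mem_singleton_iff.1 h1] at h2
        exact h2 this
      | none =>
        exfalso
        rw [nbhd_none] at hw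
        -- at least two elements outside
        obtain ⟨a, ha, b, hb, hab⟩ := Finset.one_lt_card.1 hmiss
        have ha' : (some a : Option (Fin m)) ∈ ({x : Option (Fin m) | x.isSome} : Set _) \ T := by
          refine ⟨by simp, ?_⟩
          rintro (h | h)
          · exact (Finset.mem_filter.1 ha).2 h
          · simp at h
        have hb' : (some b : Option (Fin m)) ∈ ({x : Option (Fin m) | x.isSome} : Set _) \ T := by
          refine ⟨by simp, ?_⟩
          rintro (h | h)
          · exact (Finset.mem_filter.1 hb).2 h
          · simp at h
        rw [hw] at ha' hb'
        have : (some a : Option (Fin m)) = some b :=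
          (Set.mem_singleton_iff.1 ha').trans (Set.mem_singleton_iff.1 hb').symm
        exact hab (Option.some_injective _ this)
    have hTu := hpd T hsub hfc
    -- T = univ impossible: pick an element not in S
    obtain ⟨a, ha⟩ := Finset.card_pos (s := univ.filter (fun a : Fin m => some a ∉ S)) |>.1 (by omega)
    have haT : (some a : Option (Fin m)) ∈ T := hTu ▸ Set.mem_univ _
    rcases haT with h | h
    · exact (Finset.mem_filter.1 ha).2 h
    · simp at h
  · rintro (hnone | hcard)
    · -- center in S: closedNbhd = univ
      intro T hsub _
      apply Set.eq_univ_of_univ_subset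
      intro x _
      apply hsub
      cases x with
      | none => exact Or.inl hnone
      | some a => exact Or.inr ⟨none, hnone, (adj_iff _ _).2 (Or.inl ⟨rfl, by simp⟩)⟩
    · intro T hsub hfc
      by_cases hnone : none ∈ S
      · apply Set.eq_univ_of_univ_subset
        intro x _
        apply hsub
        cases x with
        | none => exact Or.inl hnone
        | some a => exact Or.inr ⟨none, hnone, (adj_iff _ _).2 (Or.inl ⟨rfl, by simp⟩)⟩
      -- S consists of leaves, card ≥ m-1
      have hST : ↑S ⊆ T := fun x hx => hsub (Or.inl hx)
      have hSne : S.Nonempty := Finset.card_pos.1 (by omega)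
      obtain ⟨u, hu⟩ := hSne
      have huv : ∃ a : Fin m, u = some a := by
        cases u with
        | none => exact absurd hu hnone
        | some a => exact ⟨a, rfl⟩
      obtain ⟨a0, rfl⟩ := huv
      have hnT : (none : Option (Fin m)) ∈ T :=
        hsub (Or.inr ⟨some a0, hu, (adj_iff _ _).2 (Or.inr ⟨by simp, rfl⟩)⟩)
      -- the preimage has card ≥ m - 1, so at most one leaf missing
      have hp := card_pre S hnone
      apply Set.eq_univ_of_univ_subset
      intro x _
      cases x with
      | none => exact hnT
      | some a =>
        by_cases haT : some a ∈ T
        · exact haT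
        -- then some a ∉ S, and all other leaves are in S
        have haS : some a ∉ S := fun h => haT (hST h)
        have hall : ∀ b : Fin m, b ≠ a → some b ∈ S := by
          intro b hb
          by_contra hbS
          -- then filter misses both a and b, card ≤ m - 2
          have hsubset : (univ.filter (fun c : Fin m => some c ∈ S)) ⊆
              (univ.erase a).erase b := by
            intro c hc
            have hc' := (Finset.mem_filter.1 hc).2
            refine Finset.mem_erase.2 ⟨?_, Finset.mem_erase.2 ⟨?_, Finset.mem_univ _⟩⟩
            · rintro rfl; exact hbS hc'
            · rintro rfl; exact haS hc'
          have hle := Finset.card_le_card hsubset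
          have h1 : ((univ : Finset (Fin m)).erase a).card = m - 1 := by
            rw [Finset.card_erase_of_mem (Finset.mem_univ _)]; simp
          have h2 : (((univ : Finset (Fin m)).erase a).erase b).card ≤ m - 2 := by
            rw [Finset.card_erase_of_mem (Finset.mem_erase.2 ⟨hb, Finset.mem_univ _⟩)]
            omega
          omega
        -- force: neighborSet none \ T = {some a}
        have hforce : (Star).neighborSet none \ T = {some a} := by
          rw [nbhd_none]
          ext x
          constructor
          · rintro ⟨hx1, hx2⟩
            cases x with
            | none => simp at hx1
            | some b =>
              by_cases hba : b = a
              · rw [hba]; rfl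
              · exact absurd (hST (hall b hba)) hx2
          · rintro rfl
            exact ⟨by simp, haT⟩
        exact absurd (hfc none hnT (some a) hforce) haT


open Classical in
lemma pdCount_eq {V : Type*} [Fintype V] (G : SimpleGraph V) (i : ℕ) :
    pdCount G i =
      (univ.filter (fun S : Finset V => G.IsPowerDomSet ↑S ∧ S.card = i)).card := by
  rw [_root_.pdCount, Nat.card_eq_fintype_card, Fintype.card_subtype]

lemma countTot (i : ℕ) :
    (univ.filter (fun S : Finset (Option (Fin m)) => S.card = i)).card = (m+1).choose i := by
  have h : (univ.filter (fun S : Finset (Option (Fin m)) => S.card = i)) =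
      Finset.powersetCard i univ := by
    ext S; simp [Finset.mem_powersetCard_univ]
  rw [h, Finset.card_powersetCard]
  simp

lemma countNo (i : ℕ) :
    (univ.filter (fun S : Finset (Option (Fin m)) => S.card = i ∧ none ∉ S)).card
      = m.choose i := by
  have h : (univ.filter (fun S : Finset (Option (Fin m)) => S.card = i ∧ none ∉ S)) =
      Finset.powersetCard i ((univ : Finset (Option (Fin m))).erase none) := by
    ext S
    simp only [Finset.mem_filter, Finset.mem_univ, true_and, Finset.mem_powersetCard,
      Finset.subset_erase, Finset.subset_univ, true_and]
    tauto
  rw [h, Finset.card_powersetCard, Finset.card_erase_of_mem (Finset.mem_univ _)]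
  simp

lemma countYes (j : ℕ) :
    (univ.filter (fun S : Finset (Option (Fin m)) => S.card = j+1 ∧ none ∈ S)).card
      = m.choose j := by
  classical
  have htot := Finset.card_filter_add_card_filter_not
    (s := (univ : Finset (Finset (Option (Fin m)))).filter (fun S => S.card = j+1))
    (p := fun S => none ∈ S)
  rw [Finset.filter_filter, Finset.filter_filter, countTot (m := m) (j+1)] at htot
  have hno := countNo (m := m) (j+1)
  have hnn : (univ.filter (fun S : Finset (Option (Fin m)) =>
      S.card = j+1 ∧ none ∉ S)).card = m.choose (j+1) := hno
  have hpas : (m+1).choose (j+1) = m.choose j + m.choose (j+1) := Nat.choose_succ_succ m j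
  omega

lemma pdCount_formula (hm : 2 ≤ m) (j : ℕ) :
    pdCount (Star) (1+j) =
      m.choose j + (if m - 1 ≤ 1+j then m.choose (1+j) else 0) := by
  classical
  rw [pdCount_eq]
  have hcong : (univ.filter (fun S : Finset (Option (Fin m)) =>
      (Star).IsPowerDomSet ↑S ∧ S.card = 1+j))
      = univ.filter (fun S : Finset (Option (Fin m)) =>
        (S.card = j+1 ∧ none ∈ S) ∨ (S.card = j+1 ∧ none ∉ S ∧ m - 1 ≤ 1+j)) := by
    ext S
    simp only [Finset.mem_filter, Finset.mem_univ, true_and, char hm]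
    by_cases h : none ∈ S <;> simp [h] <;> omega
  rw [hcong, Finset.filter_or, Finset.card_union_of_disjoint]
  · congr 1
    · exact countYes j
    · by_cases h : m - 1 ≤ 1 + j
      · simp only [h, and_true, if_true]
        rw [Nat.add_comm 1 j]
        exact countNo (j+1)
      · rw [if_neg h]
        rw [Finset.card_eq_zero, Finset.filter_eq_empty_iff]
        intro S _
        tauto
  · rw [Finset.disjoint_left]
    intro S hS hS'
    exact (Finset.mem_filter.1 hS').2.2.1 (Finset.mem_filter.1 hS).2.2

lemma pdPoly_star (hm : 2 ≤ m) :
    pdPoly (Star) =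
      X * (X + 1) ^ m + X ^ m + Polynomial.C (m : ℤ) * X ^ (m-1) := by
  unfold pdPoly
  have hcard : Fintype.card (Option (Fin m)) = m + 1 := by simp
  rw [hcard, ← Finset.Ico_add_one_right_eq_Icc, Finset.sum_Ico_eq_sum_range]
  have hrw : m + 1 + 1 - 1 = m + 1 := by omega
  rw [hrw]
  have hterm : ∀ j ∈ Finset.range (m+1),
      Polynomial.C (pdCount (Star) (1+j) : ℤ) * X ^ (1+j) =
        (Polynomial.C ((m.choose j : ℕ) : ℤ) * X ^ (1+j)) +
        ((if j = m - 2 then Polynomial.C (m : ℤ) * X ^ (1+j) else 0) +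
         (if j = m - 1 then X ^ (1+j) else 0)) := by
    intro j hj
    rw [pdCount_formula hm j]
    push_cast
    rw [C_add, add_mul]
    congr 1
    rcases Nat.lt_or_ge (1+j) (m-1) with h | h
    · rw [if_neg (by omega), if_neg (by omega), if_neg (by omega)]
      simp
    · rw [if_pos h]
      rcases Nat.lt_trichotomy j (m-1) with h1 | h1 | h1
      · -- j = m - 2
        have hj2 : j = m - 2 := by omega
        have h1j : 1 + j = m - 1 := by omega
        rw [if_pos hj2, if_neg (by omega), h1j, Nat.choose_symm (by omega : 1 ≤ m)]
        simp [Nat.choose_one_right]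
      · -- j = m - 1, 1+j = m
        have h1j : 1 + j = m := by omega
        rw [if_neg (by omega), if_pos h1, h1j, Nat.choose_self]
        simp
      · -- 1 + j > m, choose = 0
        have : m.choose (1+j) = 0 := Nat.choose_eq_zero_of_lt (by omega)
        rw [this, if_neg (by omega), if_neg (by omega)]
        simp
  rw [Finset.sum_congr rfl hterm, Finset.sum_add_distrib, Finset.sum_add_distrib]
  have hsum1 : (∑ j ∈ Finset.range (m+1),
      Polynomial.C ((m.choose j : ℕ) : ℤ) * X ^ (1+j)) = X * (X+1)^m := by
    rw [add_pow]
    rw [Finset.mul_sum]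
    apply Finset.sum_congr rfl
    intro j hj
    rw [pow_add, pow_one]
    simp only [one_pow, mul_one]
    rw [← C_eq_natCast]
    ring
  have hsum2 : (∑ j ∈ Finset.range (m+1),
      if j = m - 2 then Polynomial.C (m : ℤ) * X ^ (1+j) else 0)
      = Polynomial.C (m : ℤ) * X ^ (m-1) := by
    rw [Finset.sum_ite_eq' (Finset.range (m+1)) (m-2)
      (fun j => Polynomial.C (m : ℤ) * X ^ (1+j))]
    rw [if_pos (Finset.mem_range.2 (by omega))]
    have h2 : 1 + (m - 2) = m - 1 := by omega
    rw [h2]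
  have hsum3 : (∑ j ∈ Finset.range (m+1),
      if j = m - 1 then X ^ (1+j) else (0 : Polynomial ℤ)) = X ^ m := by
    rw [Finset.sum_ite_eq' (Finset.range (m+1)) (m-1) (fun j => (X : Polynomial ℤ) ^ (1+j))]
    rw [if_pos (Finset.mem_range.2 (by omega))]
    have h2 : 1 + (m - 1) = m := by omega
    rw [h2]
  rw [hsum1, hsum2, hsum3]
  ring

theorem stmt17 (n : ℕ) (hn : 3 ≤ n) :
    pdPoly (addDomVertex (⊥ : SimpleGraph (Fin (n - 1)))) =
      Polynomial.X * (Polynomial.X + 1) ^ (n - 1) + Polynomial.X ^ (n - 1) +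
        Polynomial.C ((n : ℤ) - 1) * Polynomial.X ^ (n - 2) := by
  have hm : 2 ≤ n - 1 := by omega
  have h1 : n - 1 - 1 = n - 2 := by omega
  have h2 : ((n - 1 : ℕ) : ℤ) = (n : ℤ) - 1 := by
    have : 1 ≤ n := by omega
    push_cast [Nat.cast_sub this]
    ring
  rw [pdPoly_star hm, h1, h2]
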